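/- Let p be a prime, f ∈ ℤ[x,y] a polynomial with integer coefficients and nonzero constant term, and (r₁,s₁), (r₂,s₂) integer points with p ∣ f(r₁,s₁) and p ∣ f(r₂,s₂). Assume f_x(r₁,s₁)·f_y(r₂,s₂) − f_y(r₁,s₁)·f_x(r₂,s₂) ≢ 0 (mod p). Then there is exactly one pair (k,l) ∈ {0,1,…,p−1}² such that p² ∣ f(r₁+kp, s₁+lp) and p² ∣ f(r₂+kp, s₂+lp). -/

import Mathlib

open MvPolynomial

lemma taylor2 (p : ℤ) (f : MvPolynomial (Fin 2) ℤ) (r s a b : ℤ) :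
    p ^ 2 ∣ eval ![r + a * p, s + b * p] f - eval ![r, s] f
      - a * p * eval ![r, s] (pderiv 0 f)
      - b * p * eval ![r, s] (pderiv 1 f) := by
  induction f using MvPolynomial.induction_on with
  | C c => simp
  | add f g hf hg =>
      have h : p ^ 2 ∣ _ := dvd_add hf hg
      convert h using 1
      simp only [map_add]
      ring
  | mul_X f i hf =>
      obtain ⟨c, hc⟩ := hf
      have hdiff : eval ![r + a * p, s + b * p] f - eval ![r, s] f
          = p * (p * c + a * eval ![r, s] (pderiv 0 f) + b * eval ![r, s] (pderiv 1 f)) := by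
        linear_combination hc
      fin_cases i
      · refine ⟨r * c + a * (p * c + a * eval ![r, s] (pderiv 0 f) + b * eval ![r, s] (pderiv 1 f)), ?_⟩
        simp [pderiv_mul, pderiv_X, Pi.single_apply, Fin.ext_iff, Matrix.cons_val_zero,
          Matrix.cons_val_one, Matrix.head_cons, Pi.single_apply, map_one, map_zero,
          Fin.mk_zero, Fin.mk_one]
        linear_combination r * hc + a * p * hdiff
      · refine ⟨s * c + b * (p * c + a * eval ![r, s] (pderiv 0 f) + b * eval ![r, s] (pderiv 1 f)), ?_⟩
        simp [pderiv_mul, pderiv_X, Pi.single_apply, Fin.ext_iff, Matrix.cons_val_zero,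
          Matrix.cons_val_one, Matrix.head_cons, Pi.single_apply, map_one, map_zero,
          Fin.mk_zero, Fin.mk_one]
        linear_combination s * hc + b * p * hdiff

theorem stmt_5 (p : ℕ) (hp : p.Prime) (f : MvPolynomial (Fin 2) ℤ)
    (hconst : MvPolynomial.coeff 0 f ≠ 0) (r₁ s₁ r₂ s₂ : ℤ)
    (h₁ : (p : ℤ) ∣ MvPolynomial.eval ![r₁, s₁] f)
    (h₂ : (p : ℤ) ∣ MvPolynomial.eval ![r₂, s₂] f)
    (hdet : ¬ (p : ℤ) ∣
      (MvPolynomial.eval ![r₁, s₁] (MvPolynomial.pderiv 0 f) *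
        MvPolynomial.eval ![r₂, s₂] (MvPolynomial.pderiv 1 f) -
       MvPolynomial.eval ![r₁, s₁] (MvPolynomial.pderiv 1 f) *
        MvPolynomial.eval ![r₂, s₂] (MvPolynomial.pderiv 0 f))) :
    ∃! kl : ℕ × ℕ, kl ∈ Finset.range p ×ˢ Finset.range p ∧
      ((p : ℤ) ^ 2 ∣ MvPolynomial.eval ![r₁ + (kl.1 : ℤ) * p, s₁ + (kl.2 : ℤ) * p] f) ∧
      ((p : ℤ) ^ 2 ∣ MvPolynomial.eval ![r₂ + (kl.1 : ℤ) * p, s₂ + (kl.2 : ℤ) * p] f) := by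
  haveI : Fact p.Prime := ⟨hp⟩
  obtain ⟨c₁, hc₁⟩ := h₁
  obtain ⟨c₂, hc₂⟩ := h₂
  set A₁ := MvPolynomial.eval ![r₁, s₁] (MvPolynomial.pderiv 0 f) with hA₁
  set B₁ := MvPolynomial.eval ![r₁, s₁] (MvPolynomial.pderiv 1 f) with hB₁
  set A₂ := MvPolynomial.eval ![r₂, s₂] (MvPolynomial.pderiv 0 f) with hA₂
  set B₂ := MvPolynomial.eval ![r₂, s₂] (MvPolynomial.pderiv 1 f) with hB₂
  have hp0 : (p : ℤ) ≠ 0 := by exact_mod_cast hp.ne_zero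
  -- the key congruence criterion
  have key : ∀ (r s c A B : ℤ), MvPolynomial.eval ![r, s] f = p * c →
      A = MvPolynomial.eval ![r, s] (MvPolynomial.pderiv 0 f) →
      B = MvPolynomial.eval ![r, s] (MvPolynomial.pderiv 1 f) →
      ∀ k l : ℕ,
      ((p : ℤ) ^ 2 ∣ MvPolynomial.eval ![r + (k : ℤ) * p, s + (l : ℤ) * p] f ↔
        ((c : ZMod p) + (k : ZMod p) * ((A : ℤ) : ZMod p) + (l : ZMod p) * ((B : ℤ) : ZMod p) = 0)) := by
    intro r s c A B hc hA hB k l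
    obtain ⟨t, ht⟩ := taylor2 (p : ℤ) f r s k l
    have heval : MvPolynomial.eval ![r + (k : ℤ) * p, s + (l : ℤ) * p] f
        = (p : ℤ) ^ 2 * t + (p : ℤ) * (c + k * A + l * B) := by
      rw [hA, hB]
      linear_combination ht + hc
    rw [heval]
    have : ((p:ℤ) ^ 2 ∣ (p : ℤ) ^ 2 * t + (p : ℤ) * (c + k * A + l * B)) ↔
        ((p:ℤ) ∣ c + k * A + l * B) := by
      rw [dvd_add_right ⟨t, rfl⟩, pow_two, mul_dvd_mul_iff_left hp0]
    rw [this, ← ZMod.intCast_zmod_eq_zero_iff_dvd]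
    push_cast
    ring_nf
  have key₁ := key r₁ s₁ c₁ A₁ B₁ hc₁ rfl rfl
  have key₂ := key r₂ s₂ c₂ A₂ B₂ hc₂ rfl rfl
  -- move to ZMod p
  set a₁ : ZMod p := ((A₁ : ℤ) : ZMod p)
  set b₁ : ZMod p := ((B₁ : ℤ) : ZMod p)
  set a₂ : ZMod p := ((A₂ : ℤ) : ZMod p)
  set b₂ : ZMod p := ((B₂ : ℤ) : ZMod p)
  set d₁ : ZMod p := ((c₁ : ℤ) : ZMod p)
  set d₂ : ZMod p := ((c₂ : ℤ) : ZMod p)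
  have hD : a₁ * b₂ - b₁ * a₂ ≠ 0 := by
    intro h
    apply hdet
    rw [← ZMod.intCast_zmod_eq_zero_iff_dvd]
    push_cast
    exact h
  set D : ZMod p := a₁ * b₂ - b₁ * a₂ with hDdef
  set k₀ : ZMod p := (b₁ * d₂ - b₂ * d₁) * D⁻¹ with hk₀
  set l₀ : ZMod p := (a₂ * d₁ - a₁ * d₂) * D⁻¹ with hl₀
  have hDk₀ : D * k₀ = b₁ * d₂ - b₂ * d₁ := by
    rw [hk₀, mul_comm D, mul_assoc, inv_mul_cancel₀ hD, mul_one]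
  have hDl₀ : D * l₀ = a₂ * d₁ - a₁ * d₂ := by
    rw [hl₀, mul_comm D, mul_assoc, inv_mul_cancel₀ hD, mul_one]
  have sol : ∀ u v : ZMod p, (d₁ + u * a₁ + v * b₁ = 0 ∧ d₂ + u * a₂ + v * b₂ = 0)
      ↔ (u = k₀ ∧ v = l₀) := by
    intro u v
    constructor
    · rintro ⟨e1, e2⟩
      constructor
      · apply mul_left_cancel₀ hD
        rw [hDk₀]
        linear_combination b₂ * e1 - b₁ * e2
      · apply mul_left_cancel₀ hD
        rw [hDl₀]
        linear_combination a₁ * e2 - a₂ * e1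
    · rintro ⟨rfl, rfl⟩
      constructor
      · apply mul_left_cancel₀ hD
        rw [mul_zero]
        linear_combination a₁ * hDk₀ + b₁ * hDl₀ + d₁ * hDdef
      · apply mul_left_cancel₀ hD
        rw [mul_zero]
        linear_combination a₂ * hDk₀ + b₂ * hDl₀ + d₂ * hDdef
  have hval : ∀ z : ZMod p, ((z.val : ZMod p) = z) := fun z => by
    simp [ZMod.natCast_val, ZMod.cast_id]
  refine ⟨(k₀.val, l₀.val), ⟨?_, ?_, ?_⟩, ?_⟩
  · simp [Finset.mem_product, ZMod.val_lt]
  · rw [key₁]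
    rw [hval k₀, hval l₀]
    exact ((sol k₀ l₀).mpr ⟨rfl, rfl⟩).1
  · rw [key₂]
    rw [hval k₀, hval l₀]
    exact ((sol k₀ l₀).mpr ⟨rfl, rfl⟩).2
  · rintro ⟨k, l⟩ ⟨hmem, hk1, hk2⟩
    rw [key₁] at hk1
    rw [key₂] at hk2
    obtain ⟨hu, hv⟩ := (sol (k : ZMod p) (l : ZMod p)).mp ⟨hk1, hk2⟩
    simp only [Finset.mem_product, Finset.mem_range] at hmem
    have hk : k = k₀.val := by
      rw [← hu, ZMod.val_cast_of_lt hmem.1]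
    have hl : l = l₀.val := by
      rw [← hv, ZMod.val_cast_of_lt hmem.2]
    exact Prod.ext hk hl
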